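/- Let N ∈ ℕ and let ℓ, r : Fin (N+1) → ℝ and β : Fin (N+1) → ℝ → ℝ. Assume: (i) for every i < N, ℓ(i) ≤ ℓ(i+1), ℓ(i+1) ≤ r(i), and r(i) ≤ r(i+1); (ii) β(0)(ℓ(0)) ≥ 0; (iii) for every i, if β(i)(ℓ(i)) ≥ 0 then β(i)(t) ≥ 0 for all t ∈ [ℓ(i), r(i)]; (iv) for every i < N, if β(i)(ℓ(i+1)) ≥ 0 then β(i+1)(ℓ(i+1)) ≥ 0. Then for every i and every t ∈ [ℓ(i), r(i)], β(i)(t) ≥ 0. Moreover, if additionally for each i there are reals sᵢ, eᵢ with ℓ(i) ≤ sᵢ, eᵢ ≤ r(i), and a function hᵢ : ℝ → ℝ with β(i)(t) ≤ hᵢ(t) for all t ∈ [sᵢ, eᵢ], then hᵢ(t) ≥ 0 for all t ∈ [sᵢ, eᵢ]. -/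
import Mathlib


/-- Core of Proposition 1: chained forward invariance along a sequence of CBFs with
interlaced time domains, plus the conclusion that the value functions of the set nodes
are nonnegative on the coded time intervals. -/
theorem sTLT_complete_path_satisfaction
    (N : ℕ) (ℓ r : Fin (N + 1) → ℝ) (β : Fin (N + 1) → ℝ → ℝ)
    (hinter : ∀ i : Fin N, ℓ i.castSucc ≤ ℓ i.succ ∧ ℓ i.succ ≤ r i.castSucc ∧
      r i.castSucc ≤ r i.succ)
    (hinit : β 0 (ℓ 0) ≥ 0)
    (hinv : ∀ i : Fin (N + 1), β i (ℓ i) ≥ 0 → ∀ t ∈ Set.Icc (ℓ i) (r i), β i t ≥ 0)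
    (hchain : ∀ i : Fin N, β i.castSucc (ℓ i.succ) ≥ 0 → β i.succ (ℓ i.succ) ≥ 0)
    (s e : Fin (N + 1) → ℝ) (h : Fin (N + 1) → ℝ → ℝ)
    (hs : ∀ i, ℓ i ≤ s i) (he : ∀ i, e i ≤ r i)
    (hle : ∀ i, ∀ t ∈ Set.Icc (s i) (e i), β i t ≤ h i t) :
    (∀ i : Fin (N + 1), ∀ t ∈ Set.Icc (ℓ i) (r i), β i t ≥ 0) ∧
    (∀ i : Fin (N + 1), ∀ t ∈ Set.Icc (s i) (e i), h i t ≥ 0) := by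
  have key : ∀ i : Fin (N + 1), β i (ℓ i) ≥ 0 := by
    intro i
    induction i using Fin.induction with
    | zero => exact hinit
    | succ j ih =>
      exact hchain j (hinv j.castSucc ih (ℓ j.succ) ⟨(hinter j).1, (hinter j).2.1⟩)
  have main : ∀ i : Fin (N + 1), ∀ t ∈ Set.Icc (ℓ i) (r i), β i t ≥ 0 :=
    fun i => hinv i (key i)
  refine ⟨main, fun i t ht => ?_⟩
  exact le_trans (main i t ⟨le_trans (hs i) ht.1, le_trans ht.2 (he i)⟩) (hle i t ht)
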